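/- Let m ≥ n ≥ 2 and let Γ be an m×n random matrix with independent standard Gaussian N(0,1) entries, k = m − n + 1, and s₁(Γ) the smallest eigenvalue of ΓᵀΓ. Then the exponent k/2 is optimal in the tail bound: for any γ > k/2 there is no constant δ > 0 such that P(s₁(Γ) ≤ ε) ≤ (δε)^γ for all ε > 0. -/

import Mathlib

open MeasureTheory ProbabilityTheory ENNReal Matrix

noncomputable section

/-- The smallest eigenvalue `s₁(A)` of the symmetric positive semidefinite matrix `AᵀA`. -/
def s1 {m n : ℕ} (A : Matrix (Fin m) (Fin n) ℝ) : ℝ :=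
  ⨅ i, (Matrix.isHermitian_conjTranspose_mul_self A).eigenvalues i

/-- The law of an `m × n` random matrix with i.i.d. standard Gaussian `N(0,1)` entries. -/
def wishartLaw (m n : ℕ) : Measure (Fin m → Fin n → ℝ) :=
  Measure.pi fun _ => Measure.pi fun _ => gaussianReal 0 1

/-! ### Auxiliary linear algebra -/

lemma star_eq_transpose_real {n' : Type*} [Fintype n'] (U : Matrix n' n' ℝ) :
    star U = Uᵀ := by
  ext i j
  simp [Matrix.star_eq_conjTranspose, Matrix.conjTranspose_apply]

lemma rayleigh {n' : Type*} [Fintype n'] [Nonempty n'] [DecidableEq n']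
    (H : Matrix n' n' ℝ) (hH : H.IsHermitian) (v : n' → ℝ) :
    (⨅ i, hH.eigenvalues i) * (v ⬝ᵥ v) ≤ v ⬝ᵥ (H *ᵥ v) := by
  set U : Matrix n' n' ℝ := (hH.eigenvectorUnitary : Matrix n' n' ℝ) with hU
  have hU2 : U * star U = 1 := (Unitary.mem_iff.mp hH.eigenvectorUnitary.2).2
  set w := star U *ᵥ v with hw
  have hdiag : (RCLike.ofReal ∘ hH.eigenvalues : n' → ℝ) = hH.eigenvalues := rfl
  have h1 : v ⬝ᵥ (H *ᵥ v) = ∑ i, hH.eigenvalues i * (w i)^2 := by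
    conv_lhs => rw [hH.spectral_theorem, Unitary.conjStarAlgAut_apply]
    rw [← Matrix.mulVec_mulVec, ← Matrix.mulVec_mulVec]
    rw [Matrix.dotProduct_mulVec v U, ← Matrix.mulVec_transpose,
      ← star_eq_transpose_real, hdiag]
    show w ⬝ᵥ (Matrix.diagonal hH.eigenvalues *ᵥ w) = _
    simp only [dotProduct, Matrix.mulVec_diagonal]
    exact Finset.sum_congr rfl fun i _ => by ring
  have h2 : v ⬝ᵥ v = ∑ i, (w i)^2 := by
    have : w ⬝ᵥ w = v ⬝ᵥ v := by
      rw [hw, Matrix.dotProduct_mulVec, ← Matrix.mulVec_transpose,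
        ← star_eq_transpose_real, star_star, Matrix.mulVec_mulVec, hU2, Matrix.one_mulVec]
    rw [← this]
    simp [dotProduct, sq]
  rw [h1, h2, Finset.mul_sum]
  refine Finset.sum_le_sum fun i _ => ?_
  have hle : (⨅ i, hH.eigenvalues i) ≤ hH.eigenvalues i :=
    ciInf_le (Finite.bddBelow_range _) i
  nlinarith [sq_nonneg (w i)]

lemma dom_key {N : ℕ} (hN : 0 < N) (T : Matrix (Fin N) (Fin N) ℝ) (r : ℝ)
    (hT : ∀ i j, |T i j - if i = j then 1 else 0| ≤ r) (hr : (N:ℝ) * r ≤ 1/2)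
    (z : Fin N → ℝ) (B : ℝ) (hB : ∀ i, |(T *ᵥ z) i| ≤ B) :
    ∀ j, |z j| ≤ 2 * B := by
  have hne : (Finset.univ : Finset (Fin N)).Nonempty :=
    ⟨⟨0, hN⟩, Finset.mem_univ _⟩
  set M := Finset.univ.sup' hne (fun j => |z j|) with hMdef
  have hM : ∀ j, |z j| ≤ M := fun j => Finset.le_sup' (fun j => |z j|) (Finset.mem_univ j)
  have hM0 : 0 ≤ M := le_trans (abs_nonneg _) (hM ⟨0, hN⟩)
  have hr0 : 0 ≤ r := by
    have h1 := hT ⟨0,hN⟩ ⟨0,hN⟩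
    have h2 := abs_nonneg (T ⟨0,hN⟩ ⟨0,hN⟩ - if (⟨0,hN⟩:Fin N) = ⟨0,hN⟩ then (1:ℝ) else 0)
    linarith
  have key : ∀ j, |z j| ≤ B + M / 2 := by
    intro j
    have hTz : z j = (T *ᵥ z) j - ∑ i, (T j i - if j = i then 1 else 0) * z i := by
      simp only [Matrix.mulVec, dotProduct, sub_mul, Finset.sum_sub_distrib,
        ite_mul, one_mul, zero_mul]
      rw [Finset.sum_ite_eq (Finset.univ : Finset (Fin N)) j z]
      simp
    have hsum : |∑ i, (T j i - if j = i then 1 else 0) * z i| ≤ (N:ℝ) * r * M := by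
      calc |∑ i, (T j i - if j = i then 1 else 0) * z i|
          ≤ ∑ i, |(T j i - if j = i then 1 else 0) * z i| := Finset.abs_sum_le_sum_abs _ _
        _ ≤ ∑ _i : Fin N, r * M := by
            refine Finset.sum_le_sum fun i _ => ?_
            rw [abs_mul]
            exact mul_le_mul (hT j i) (hM i) (abs_nonneg _) hr0
        _ = (N:ℝ) * (r * M) := by simp [Finset.sum_const, mul_comm]
        _ = (N:ℝ) * r * M := by ring
    have hNrM : (N:ℝ) * r * M ≤ M / 2 := by nlinarith
    calc |z j| = |(T *ᵥ z) j - ∑ i, (T j i - if j = i then 1 else 0) * z i| := by rw [← hTz]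
      _ ≤ |(T *ᵥ z) j| + |∑ i, (T j i - if j = i then 1 else 0) * z i| := abs_sub _ _
      _ ≤ B + M / 2 := add_le_add (hB j) (le_trans hsum hNrM)
  have hM2 : M ≤ B + M / 2 := Finset.sup'_le _ _ fun j _ => key j
  intro j
  calc |z j| ≤ M := hM j
    _ ≤ 2 * B := by linarith

/-! ### The correction vector -/

variable {m n N : ℕ}

def Tmat (hNm : N ≤ m) (hNn : N < n) (u : ∀ _ : {i : Fin m // (i:ℕ) < N}, Fin n → ℝ) :
    Matrix (Fin N) (Fin N) ℝ :=
  fun i j => u ⟨⟨i.1, lt_of_lt_of_le i.2 hNm⟩, i.2⟩ ⟨j.1, lt_trans j.2 hNn⟩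

def gvec (hNm : N ≤ m) (hNn : N < n) (u : ∀ _ : {i : Fin m // (i:ℕ) < N}, Fin n → ℝ) :
    Fin N → ℝ :=
  fun i => u ⟨⟨i.1, lt_of_lt_of_le i.2 hNm⟩, i.2⟩ ⟨N, hNn⟩

def afun (hNm : N ≤ m) (hNn : N < n) (u : ∀ _ : {i : Fin m // (i:ℕ) < N}, Fin n → ℝ) :
    Fin N → ℝ :=
  (Tmat hNm hNn u)⁻¹ *ᵥ gvec hNm hNn u

lemma measurable_afun (hNm : N ≤ m) (hNn : N < n) (j : Fin N) :
    Measurable (fun u : ∀ _ : {i : Fin m // (i:ℕ) < N}, Fin n → ℝ => afun hNm hNn u j) := by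
  have hT : Continuous (fun u : ∀ _ : {i : Fin m // (i:ℕ) < N}, Fin n → ℝ =>
      Tmat hNm hNn u) := by
    apply continuous_pi
    intro i
    apply continuous_pi
    intro j'
    exact (continuous_apply _).comp (continuous_apply _)
  have hg : ∀ i : Fin N, Continuous (fun u : ∀ _ : {i : Fin m // (i:ℕ) < N}, Fin n → ℝ =>
      gvec hNm hNn u i) := fun i => (continuous_apply _).comp (continuous_apply _)
  have hdet : Measurable (fun u : ∀ _ : {i : Fin m // (i:ℕ) < N}, Fin n → ℝ =>
      (Ring.inverse (Tmat hNm hNn u).det : ℝ)) := by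
    simp only [Ring.inverse_eq_inv']
    exact (hT.matrix_det.measurable).inv
  have hadj : Measurable (fun u : ∀ _ : {i : Fin m // (i:ℕ) < N}, Fin n → ℝ =>
      ((Tmat hNm hNn u).adjugate *ᵥ gvec hNm hNn u) j) := by
    apply Measurable.comp (measurable_pi_apply j)
    apply Continuous.measurable
    exact (hT.matrix_adjugate.matrix_mulVec (continuous_pi hg))
  have : (fun u : ∀ _ : {i : Fin m // (i:ℕ) < N}, Fin n → ℝ => afun hNm hNn u j)
      = fun u => (Ring.inverse (Tmat hNm hNn u).det : ℝ) *
        ((Tmat hNm hNn u).adjugate *ᵥ gvec hNm hNn u) j := by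
    funext u
    rw [afun, Matrix.inv_def, Matrix.smul_mulVec]
    rfl
  rw [this]
  exact hdet.mul hadj

lemma afun_spec (hN : 0 < N) (hNm : N ≤ m) (hNn : N < n)
    (u : ∀ _ : {i : Fin m // (i:ℕ) < N}, Fin n → ℝ)
    (hT : ∀ i j : Fin N, |Tmat hNm hNn u i j - if i = j then 1 else 0| ≤ 1/(2*(n:ℝ)))
    (hg : ∀ i : Fin N, |gvec hNm hNn u i| ≤ 1) :
    (Tmat hNm hNn u *ᵥ afun hNm hNn u = gvec hNm hNn u) ∧
      (∀ j, |afun hNm hNn u j| ≤ 2) := by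
  set T := Tmat hNm hNn u with hTdef
  set g := gvec hNm hNn u with hgdef
  have hr : (N:ℝ) * (1/(2*n)) ≤ 1/2 := by
    have h1 : (N:ℝ) ≤ (n:ℝ) := by exact_mod_cast le_of_lt hNn
    have h2 : (0:ℝ) < n := by exact_mod_cast lt_of_le_of_lt (Nat.zero_le N) hNn
    rw [mul_one_div, div_le_div_iff₀ (by linarith) (by norm_num : (0:ℝ) < 2)]
    nlinarith
  have hinj : Function.Injective T.mulVec := by
    intro z z' hzz
    have hz : T *ᵥ (z - z') = 0 := by
      rw [Matrix.mulVec_sub, hzz, sub_self]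
    have := dom_key hN T (1/(2*n)) hT hr (z - z') 0 (fun i => by rw [hz]; simp)
    funext j
    have h2 := this j
    simp only [Pi.sub_apply] at h2
    have h3 : z j - z' j = 0 := abs_nonpos_iff.mp (by linarith)
    linarith
  have hdet : IsUnit T.det :=
    (Matrix.isUnit_iff_isUnit_det T).mp (Matrix.mulVec_injective_iff_isUnit.mp hinj)
  have hTa : T *ᵥ afun hNm hNn u = g := by
    rw [afun, Matrix.mulVec_mulVec, ← hTdef, ← hgdef, Matrix.mul_nonsing_inv _ hdet,
      Matrix.one_mulVec]
  refine ⟨hTa, ?_⟩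
  have := dom_key hN T (1/(2*n)) hT hr (afun hNm hNn u) 1 (fun i => by rw [hTa]; exact hg i)
  intro j
  have := this j
  linarith

/-! ### The deterministic key lemma -/

lemma key_det (hN : 0 < N) (hNm : N ≤ m) (hNm2 : N < m) (hNn : N < n) (hn1 : n = N + 1)
    (x : Fin m → Fin n → ℝ) (t ε : ℝ)
    (hε : ((m - N : ℕ):ℝ) * t^2 ≤ ε)
    (hT : ∀ i j : Fin N, |Tmat hNm hNn (fun i' => x i'.1) i j - if i = j then 1 else 0|
      ≤ 1/(2*(n:ℝ)))
    (hg : ∀ i : Fin N, |gvec hNm hNn (fun i' => x i'.1) i| ≤ 1)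
    (hbot : ∀ i : Fin m, N ≤ (i:ℕ) →
      |x i ⟨N,hNn⟩ - ∑ j : Fin N, x i ⟨j.1, lt_trans j.2 hNn⟩
        * afun hNm hNn (fun i' => x i'.1) j| ≤ t) :
    s1 (Matrix.of x) ≤ ε := by
  set u : ∀ _ : {i : Fin m // (i:ℕ) < N}, Fin n → ℝ := fun i' => x i'.1 with hu
  set T := Tmat hNm hNn u with hTdef
  set g := gvec hNm hNn u with hgdef
  set a := afun hNm hNn u with hadef
  obtain ⟨hTa, ha⟩ := afun_spec hN hNm hNn u hT hg
  subst hn1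
  set v : Fin (N+1) → ℝ := fun j => if h : (j:ℕ) < N then -(a ⟨j.1, h⟩) else 1 with hv
  have hvlast : v (Fin.last N) = 1 := by simp [hv]
  have hvcast : ∀ j : Fin N, v j.castSucc = -(a j) := by
    intro j
    simp only [hv, Fin.coe_castSucc, j.2, dif_pos]
  have hAv : ∀ i : Fin m, (Matrix.of x *ᵥ v) i
      = x i (Fin.last N) - ∑ j : Fin N, x i j.castSucc * a j := by
    intro i
    show ∑ j, x i j * v j = _
    rw [Fin.sum_univ_castSucc]
    simp only [hvlast, hvcast, mul_one, mul_neg]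
    rw [Finset.sum_neg_distrib]
    ring
  have htop0 : ∀ i : Fin m, (i:ℕ) < N → (Matrix.of x *ᵥ v) i = 0 := by
    intro i hi
    rw [hAv i]
    have h1 : x i (Fin.last N) = g ⟨i.1, hi⟩ := rfl
    have h2 : ∑ j : Fin N, x i j.castSucc * a j = (T *ᵥ a) ⟨i.1, hi⟩ := by
      simp only [Matrix.mulVec, dotProduct]
      exact Finset.sum_congr rfl fun j _ => rfl
    rw [h1, h2, hTa, sub_self]
  have hbot2 : ∀ i : Fin m, N ≤ (i:ℕ) → ((Matrix.of x *ᵥ v) i)^2 ≤ t^2 := by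
    intro i hi
    have habs : |x i (Fin.last N) - ∑ j : Fin N, x i j.castSucc * a j| ≤ t := hbot i hi
    rw [hAv i]
    obtain ⟨hl, hr'⟩ := abs_le.mp habs
    nlinarith
  have hsum : ∑ i, ((Matrix.of x *ᵥ v) i)^2 ≤ ((m - N : ℕ):ℝ) * t^2 := by
    classical
    rw [← Finset.sum_filter_add_sum_filter_not Finset.univ (fun i : Fin m => (i:ℕ) < N)]
    have h0 : ∑ i ∈ Finset.univ.filter (fun i : Fin m => (i:ℕ) < N),
        ((Matrix.of x *ᵥ v) i)^2 = 0 :=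
      Finset.sum_eq_zero fun i hi => by
        rw [htop0 i (Finset.mem_filter.mp hi).2]; ring
    rw [h0, zero_add]
    have hcard : (Finset.univ.filter (fun i : Fin m => ¬ (i:ℕ) < N)).card = m - N := by
      rw [Finset.filter_not, Finset.card_sdiff_of_subset (Finset.filter_subset _ _)]
      congr 1
      · simp [Finset.card_univ]
      · have : (Finset.univ.filter fun i : Fin m => (i:ℕ) < N) = Finset.Iio ⟨N, hNm2⟩ := by
          ext i
          simp [Finset.mem_Iio, Fin.lt_def]
        rw [this, Fin.card_Iio]
    calc ∑ i ∈ Finset.univ.filter (fun i : Fin m => ¬ (i:ℕ) < N), ((Matrix.of x *ᵥ v) i)^2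
        ≤ ∑ _i ∈ Finset.univ.filter (fun i : Fin m => ¬ (i:ℕ) < N), t^2 :=
          Finset.sum_le_sum fun i hi => hbot2 i (le_of_not_gt (Finset.mem_filter.mp hi).2)
      _ = ((Finset.univ.filter (fun i : Fin m => ¬ (i:ℕ) < N)).card : ℝ) * t^2 := by
          rw [Finset.sum_const, nsmul_eq_mul]
      _ = ((m - N : ℕ):ℝ) * t^2 := by rw [hcard]
  have hv1 : 1 ≤ v ⬝ᵥ v := by
    have h1 : (1:ℝ) = v (Fin.last N) * v (Fin.last N) := by rw [hvlast]; norm_num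
    rw [dotProduct]
    calc (1:ℝ) = v (Fin.last N) * v (Fin.last N) := h1
      _ ≤ ∑ j, v j * v j := Finset.single_le_sum (f := fun j => v j * v j)
          (fun j _ => mul_self_nonneg _) (Finset.mem_univ _)
  have hs1 : 0 ≤ s1 (Matrix.of x) :=
    Real.iInf_nonneg fun i => Matrix.eigenvalues_conjTranspose_mul_self_nonneg _ i
  have hray : s1 (Matrix.of x) * (v ⬝ᵥ v)
      ≤ v ⬝ᵥ (((Matrix.of x)ᵀ * Matrix.of x) *ᵥ v) :=
    rayleigh ((Matrix.of x)ᵀ * Matrix.of x) (Matrix.isHermitian_conjTranspose_mul_self _) v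
  have hquad : v ⬝ᵥ (((Matrix.of x)ᵀ * Matrix.of x) *ᵥ v)
      = ∑ i, ((Matrix.of x *ᵥ v) i)^2 := by
    rw [← Matrix.mulVec_mulVec, Matrix.dotProduct_mulVec, Matrix.vecMul_transpose]
    simp [dotProduct, sq]
  nlinarith

/-! ### Gaussian interval bounds -/

def bconst (n : ℕ) : ℝ := 2 * Real.exp (-(2*(n:ℝ)+1)^2/2) / Real.sqrt (2*Real.pi)

lemma bconst_pos (n : ℕ) : 0 < bconst n := by
  unfold bconst
  have := Real.pi_pos
  positivity

lemma gaussianPDFReal_std (x : ℝ) :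
    gaussianPDFReal 0 1 x = (Real.sqrt (2*Real.pi))⁻¹ * Real.exp (-x^2/2) := by
  simp [gaussianPDFReal]

lemma gauss_Icc_lower (C c t : ℝ) (hC : 0 ≤ C) (hc : |c| ≤ C) (ht0 : 0 < t) (ht1 : t ≤ 1) :
    ENNReal.ofReal (2 * Real.exp (-(C+1)^2/2) / Real.sqrt (2*Real.pi) * t)
      ≤ gaussianReal 0 1 (Set.Icc (c - t) (c + t)) := by
  set d : ℝ := Real.exp (-(C+1)^2/2) / Real.sqrt (2*Real.pi) with hd
  rw [gaussianReal_apply 0 one_ne_zero]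
  have hmono : ∀ x ∈ Set.Icc (c - t) (c + t), ENNReal.ofReal d ≤ gaussianPDF 0 1 x := by
    intro x hx
    apply ENNReal.ofReal_le_ofReal
    rw [hd, gaussianPDFReal_std]
    have hx2 : x^2 ≤ (C+1)^2 := by
      have h1 : |x| ≤ C + 1 := by
        rw [abs_le] at hc ⊢
        cases' hx with h h'
        constructor <;> nlinarith
      nlinarith [abs_nonneg x, sq_abs x]
    have hexp : Real.exp (-(C+1)^2/2) ≤ Real.exp (-x^2 / 2) :=
      Real.exp_le_exp.mpr (by nlinarith)
    calc Real.exp (-(C+1)^2/2) / Real.sqrt (2*Real.pi)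
        = (Real.sqrt (2*Real.pi))⁻¹ * Real.exp (-(C+1)^2/2) := by ring
      _ ≤ (Real.sqrt (2*Real.pi))⁻¹ * Real.exp (-x^2/2) :=
          mul_le_mul_of_nonneg_left hexp (by positivity)
  calc ENNReal.ofReal (2 * Real.exp (-(C+1)^2/2) / Real.sqrt (2*Real.pi) * t)
      = ENNReal.ofReal d * ENNReal.ofReal (2*t) := by
        rw [← ENNReal.ofReal_mul (by positivity), hd]
        ring_nf
    _ = ENNReal.ofReal d * volume (Set.Icc (c - t) (c + t)) := by
        rw [Real.volume_Icc]
        congr 1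
        ring_nf
    _ = ∫⁻ _ in Set.Icc (c - t) (c + t), ENNReal.ofReal d := (setLIntegral_const _ _).symm
    _ ≤ ∫⁻ x in Set.Icc (c - t) (c + t), gaussianPDF 0 1 x :=
        setLIntegral_mono (measurable_gaussianPDF 0 1) hmono

lemma gauss_Icc_lower' (c t : ℝ) (hc : |c| ≤ 2*(n:ℝ)) (ht0 : 0 < t) (ht1 : t ≤ 1) :
    ENNReal.ofReal (bconst n * t) ≤ gaussianReal 0 1 (Set.Icc (c - t) (c + t)) :=
  gauss_Icc_lower (2*(n:ℝ)) c t (by positivity) hc ht0 ht1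

/-! ### Subtype cardinalities -/

def ltEquiv {M : ℕ} (h : N ≤ M) : {j : Fin M // (j:ℕ) < N} ≃ Fin N where
  toFun j := ⟨j.1.1, j.2⟩
  invFun j := ⟨⟨j.1, lt_of_lt_of_le j.2 h⟩, j.2⟩
  left_inv j := Subtype.ext (Fin.ext rfl)
  right_inv j := rfl

lemma card_lt_subtype {M : ℕ} (h : N ≤ M) :
    Fintype.card {j : Fin M // (j:ℕ) < N} = N :=
  (Fintype.card_congr (ltEquiv h)).trans (Fintype.card_fin N)

/-! ### The bottom-row event -/

def Rset (hNn : N < n) (a : Fin N → ℝ) (t : ℝ) : Set (Fin n → ℝ) :=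
  {y | (∀ j : Fin n, (j:ℕ) < N → |y j| ≤ 1) ∧
       |y ⟨N, hNn⟩ - ∑ j : Fin N, y ⟨j.1, lt_trans j.2 hNn⟩ * a j| ≤ t}

lemma measurable_Rset_mem {α : Type*} [MeasurableSpace α] (hNn : N < n) (t : ℝ)
    (f : α → Fin n → ℝ) (hf : Measurable f) (a : α → Fin N → ℝ)
    (ha : ∀ j, Measurable (fun z => a z j)) :
    MeasurableSet {z : α | f z ∈ Rset hNn (a z) t} := by
  have h1 : {z : α | f z ∈ Rset hNn (a z) t}
      = (⋂ j : Fin n, ⋂ (_ : (j:ℕ) < N), {z | |f z j| ≤ 1}) ∩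
        {z | |f z ⟨N, hNn⟩ - ∑ j : Fin N, f z ⟨j.1, lt_trans j.2 hNn⟩ * a z j| ≤ t} := by
    ext z
    simp only [Rset, Set.mem_setOf_eq, Set.mem_inter_iff, Set.mem_iInter]
  rw [h1]
  refine MeasurableSet.inter ?_ ?_
  · refine MeasurableSet.iInter fun j => MeasurableSet.iInter fun _ => ?_
    exact measurableSet_le ((hf.eval (a := j)).abs) measurable_const
  · refine measurableSet_le (Measurable.abs ?_) measurable_const
    refine Measurable.sub (hf.eval) ?_
    exact Finset.measurable_sum _ fun j _ => (hf.eval).mul (ha j)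

lemma nu_R_lower (hNn : N < n) (hn1 : n = N + 1) (a : Fin N → ℝ)
    (ha : ∀ j, |a j| ≤ 2) (t : ℝ) (ht0 : 0 < t) (ht1 : t ≤ 1) :
    ENNReal.ofReal (bconst n * (1/(2*(n:ℝ)))) ^ N * ENNReal.ofReal (bconst n * t)
      ≤ Measure.pi (fun _ : Fin n => gaussianReal 0 1) (Rset hNn a t) := by
  classical
  set q : Fin n → Prop := fun j => (j:ℕ) < N with hq
  haveI : ∀ j, Decidable (q j) := fun j => Nat.decLt _ _
  haveI hUniq : Unique {j : Fin n // ¬ q j} := by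
    refine ⟨⟨⟨⟨N, hNn⟩, by simp [hq]⟩⟩, fun j => Subtype.ext (Fin.ext ?_)⟩
    have h1 := j.1.2
    have h2 := j.2
    simp only [hq, not_lt] at h2
    simp only []
    omega
  set jstar : {j : Fin n // ¬ q j} := ⟨⟨N, hNn⟩, by simp [hq]⟩ with hjstar
  set S' : Set ((∀ _ : {j : Fin n // q j}, ℝ) × (∀ _ : {j : Fin n // ¬ q j}, ℝ)) :=
    {z | (∀ j, |z.1 j| ≤ 1) ∧
      |z.2 jstar - ∑ j : Fin N, z.1 ⟨⟨j.1, lt_trans j.2 hNn⟩, j.2⟩ * a j| ≤ t} with hS'def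
  have hS' : MeasurableSet S' := by
    rw [show S' = {z : (∀ _ : {j : Fin n // q j}, ℝ) × (∀ _ : {j : Fin n // ¬ q j}, ℝ) |
        ∀ j, |z.1 j| ≤ 1} ∩
        {z | |z.2 jstar - ∑ j : Fin N, z.1 ⟨⟨j.1, lt_trans j.2 hNn⟩, j.2⟩ * a j| ≤ t} from rfl]
    refine MeasurableSet.inter ?_ ?_
    · rw [show {z : (∀ _ : {j : Fin n // q j}, ℝ) × (∀ _ : {j : Fin n // ¬ q j}, ℝ) |
          ∀ j, |z.1 j| ≤ 1} = ⋂ j, {z | |z.1 j| ≤ 1} by ext z; simp]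
      exact MeasurableSet.iInter fun j =>
        measurableSet_le ((measurable_fst.eval).abs) measurable_const
    · refine measurableSet_le (Measurable.abs (Measurable.sub ?_ ?_)) measurable_const
      · exact measurable_snd.eval
      · exact Finset.measurable_sum _ fun j _ =>
          ((measurable_fst.eval).mul measurable_const)
  have hpre : (MeasurableEquiv.piEquivPiSubtypeProd (fun _ : Fin n => ℝ) q) ⁻¹' S'
      = Rset hNn a t := by
    ext y
    simp only [Set.mem_preimage, MeasurableEquiv.piEquivPiSubtypeProd,
      Equiv.piEquivPiSubtypeProd, MeasurableEquiv.coe_mk, Equiv.coe_fn_mk,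
      hS'def, Set.mem_setOf_eq, Rset]
    constructor
    · rintro ⟨h1, h2⟩
      exact ⟨fun j hj => h1 ⟨j, hj⟩, h2⟩
    · rintro ⟨h1, h2⟩
      exact ⟨fun j => h1 j.1 j.2, h2⟩
  have hmp := measurePreserving_piEquivPiSubtypeProd
    (fun _ : Fin n => gaussianReal 0 1) q
  have hmeas : Measure.pi (fun _ : Fin n => gaussianReal 0 1) (Rset hNn a t)
      = ((Measure.pi fun _ : {j : Fin n // q j} => gaussianReal 0 1).prod
         (Measure.pi fun _ : {j : Fin n // ¬ q j} => gaussianReal 0 1)) S' := by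
    rw [← hpre]
    exact hmp.measure_preimage hS'.nullMeasurableSet
  rw [hmeas, Measure.prod_apply hS']
  set Box : Set (∀ _ : {j : Fin n // q j}, ℝ) :=
    Set.pi Set.univ (fun _ => Set.Icc (-1 : ℝ) 1) with hBox
  have hBoxm : MeasurableSet Box :=
    MeasurableSet.univ_pi fun _ => measurableSet_Icc
  have hsec : ∀ y1 ∈ Box,
      ENNReal.ofReal (bconst n * t)
        ≤ (Measure.pi fun _ : {j : Fin n // ¬ q j} => gaussianReal 0 1)
            (Prod.mk y1 ⁻¹' S') := by
    intro y1 hy1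
    set c : ℝ := ∑ j : Fin N, y1 ⟨⟨j.1, lt_trans j.2 hNn⟩, j.2⟩ * a j with hc
    have hy1' : ∀ j, |y1 j| ≤ 1 := by
      intro j
      have := hy1 j (Set.mem_univ j)
      rw [abs_le]
      exact ⟨this.1, this.2⟩
    have hcbound : |c| ≤ 2*(n:ℝ) := by
      rw [hc]
      calc |∑ j : Fin N, y1 ⟨⟨j.1, lt_trans j.2 hNn⟩, j.2⟩ * a j|
          ≤ ∑ j : Fin N, |y1 ⟨⟨j.1, lt_trans j.2 hNn⟩, j.2⟩ * a j| :=
            Finset.abs_sum_le_sum_abs _ _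
        _ ≤ ∑ _j : Fin N, 2 := by
            refine Finset.sum_le_sum fun j _ => ?_
            rw [abs_mul]
            calc |y1 _| * |a j| ≤ 1 * 2 :=
              mul_le_mul (hy1' _) (ha j) (abs_nonneg _) zero_le_one
            _ = 2 := by norm_num
        _ = (N:ℝ) * 2 := by simp [Finset.sum_const, mul_comm]
        _ ≤ 2*(n:ℝ) := by
            have : (N:ℝ) ≤ (n:ℝ) := by exact_mod_cast le_of_lt hNn
            linarith
    have hsec_eq : Prod.mk y1 ⁻¹' S' = Set.pi Set.univ
        (fun _ : {j : Fin n // ¬ q j} => Set.Icc (c - t) (c + t)) := by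
      ext y2
      simp only [Set.mem_preimage, hS'def, Set.mem_setOf_eq, Set.mem_pi, Set.mem_univ,
        forall_true_left]
      constructor
      · rintro ⟨-, h2⟩ j
        rw [Subsingleton.elim j jstar]
        rw [abs_le] at h2
        exact ⟨by linarith [h2.1], by linarith [h2.2]⟩
      · intro h
        refine ⟨hy1', ?_⟩
        have := h jstar
        rw [abs_le]
        exact ⟨by linarith [this.1], by linarith [this.2]⟩
    rw [hsec_eq, Measure.pi_pi, Fintype.prod_subsingleton _ jstar]
    exact gauss_Icc_lower' c t hcbound ht0 ht1
  have hBoxMeasure : ENNReal.ofReal (bconst n * (1/(2*(n:ℝ)))) ^ N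
      ≤ (Measure.pi fun _ : {j : Fin n // q j} => gaussianReal 0 1) Box := by
    rw [hBox, Measure.pi_pi]
    have hone : ∀ _j : {j : Fin n // q j},
        ENNReal.ofReal (bconst n * (1/(2*(n:ℝ)))) ≤ gaussianReal 0 1 (Set.Icc (-1:ℝ) 1) := by
      intro _j
      have h0 : Set.Icc (-1:ℝ) 1 = Set.Icc ((0:ℝ) - 1) (0 + 1) := by norm_num
      rw [h0]
      refine le_trans ?_ (gauss_Icc_lower' 0 1 (by rw [abs_zero]; positivity) one_pos le_rfl)
      apply ENNReal.ofReal_le_ofReal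
      have hb := (bconst_pos n).le
      have hn0 : (0:ℝ) < n := by exact_mod_cast lt_of_le_of_lt (Nat.zero_le N) hNn
      have hn1' : (1:ℝ) ≤ (n:ℝ) := by
        exact_mod_cast Nat.one_le_iff_ne_zero.mpr (by omega)
      have : 1/(2*(n:ℝ)) ≤ 1 := by
        rw [div_le_one (by linarith)]
        linarith
      nlinarith
    calc ENNReal.ofReal (bconst n * (1/(2*(n:ℝ)))) ^ N
        = ∏ _j : {j : Fin n // q j}, ENNReal.ofReal (bconst n * (1/(2*(n:ℝ)))) := by
          rw [Finset.prod_const, Finset.card_univ]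
          congr 1
          exact ((Fintype.card_congr (ltEquiv (le_of_lt hNn))).trans (Fintype.card_fin N)).symm
      _ ≤ ∏ _j : {j : Fin n // q j}, gaussianReal 0 1 (Set.Icc (-1:ℝ) 1) :=
          Finset.prod_le_prod' fun j _ => hone j
  calc ENNReal.ofReal (bconst n * (1/(2*(n:ℝ)))) ^ N * ENNReal.ofReal (bconst n * t)
      ≤ (Measure.pi fun _ : {j : Fin n // q j} => gaussianReal 0 1) Box
          * ENNReal.ofReal (bconst n * t) :=
        mul_le_mul_left hBoxMeasure _
    _ = ∫⁻ y1, Box.indicator (fun _ => ENNReal.ofReal (bconst n * t)) y1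
          ∂(Measure.pi fun _ : {j : Fin n // q j} => gaussianReal 0 1) := by
        rw [lintegral_indicator_const hBoxm]
        ring
    _ ≤ ∫⁻ y1, (Measure.pi fun _ : {j : Fin n // ¬ q j} => gaussianReal 0 1)
          (Prod.mk y1 ⁻¹' S')
          ∂(Measure.pi fun _ : {j : Fin n // q j} => gaussianReal 0 1) := by
        refine lintegral_mono fun y1 => ?_
        by_cases hy : y1 ∈ Box
        · rw [Set.indicator_of_mem hy]
          exact hsec y1 hy
        · rw [Set.indicator_of_notMem hy]
          exact zero_le

lemma mem_Icc_abs {x c r : ℝ} (h : x ∈ Set.Icc (c - r) (c + r)) : |x - c| ≤ r := by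
  rw [abs_le]
  exact ⟨by linarith [h.1], by linarith [h.2]⟩

/-- The per-row box event for the top rows. -/
def Bset (n N : ℕ) (i : ℕ) : Set (Fin n → ℝ) :=
  Set.pi Set.univ fun j : Fin n =>
    Set.Icc ((if (j:ℕ) = i then 1 else 0) - (if (j:ℕ) < N then 1/(2*(n:ℝ)) else 1))
            ((if (j:ℕ) = i then 1 else 0) + (if (j:ℕ) < N then 1/(2*(n:ℝ)) else 1))

lemma box_to_T (hNm : N ≤ m) (hNn : N < n)
    (u : ∀ _ : {i : Fin m // (i:ℕ) < N}, Fin n → ℝ)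
    (hu : ∀ i : {i : Fin m // (i:ℕ) < N}, u i ∈ Bset n N i.1.1) :
    (∀ i j : Fin N, |Tmat hNm hNn u i j - if i = j then 1 else 0| ≤ 1/(2*(n:ℝ))) ∧
      (∀ i : Fin N, |gvec hNm hNn u i| ≤ 1) := by
  constructor
  · intro i j
    have habs' : |Tmat hNm hNn u i j -
        if ((⟨j.1, lt_trans j.2 hNn⟩ : Fin n) : ℕ) = (i.1 : ℕ) then (1:ℝ) else 0|
        ≤ if ((⟨j.1, lt_trans j.2 hNn⟩ : Fin n) : ℕ) < N then 1/(2*(n:ℝ)) else 1 :=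
      mem_Icc_abs (hu ⟨⟨i.1, lt_of_lt_of_le i.2 hNm⟩, i.2⟩
        ⟨j.1, lt_trans j.2 hNn⟩ (Set.mem_univ _))
    rw [if_pos (show ((⟨j.1, lt_trans j.2 hNn⟩ : Fin n) : ℕ) < N from j.2)] at habs'
    have hcond : (if ((⟨j.1, lt_trans j.2 hNn⟩ : Fin n) : ℕ) = (i.1 : ℕ) then (1:ℝ) else 0)
        = (if i = j then (1:ℝ) else 0) := by
      by_cases hij : i = j
      · subst hij; simp
      · rw [if_neg hij, if_neg (fun h => hij (Fin.ext (by simpa using h.symm)))]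
    rw [hcond] at habs'
    exact habs'
  · intro i
    have habs' : |gvec hNm hNn u i -
        if ((⟨N, hNn⟩ : Fin n) : ℕ) = (i.1 : ℕ) then (1:ℝ) else 0|
        ≤ if ((⟨N, hNn⟩ : Fin n) : ℕ) < N then 1/(2*(n:ℝ)) else 1 :=
      mem_Icc_abs (hu ⟨⟨i.1, lt_of_lt_of_le i.2 hNm⟩, i.2⟩ ⟨N, hNn⟩ (Set.mem_univ _))
    rw [if_neg (show ¬ ((⟨N, hNn⟩ : Fin n) : ℕ) = (i.1 : ℕ) by
        simp only [Fin.val_mk]; omega),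
      if_neg (show ¬ ((⟨N, hNn⟩ : Fin n) : ℕ) < N by simp)] at habs'
    simpa using habs'

lemma measure_lower (hN : 0 < N) (hNm : N ≤ m) (hNm2 : N < m) (hNn : N < n)
    (hn1 : n = N + 1) (t ε : ℝ) (ht0 : 0 < t) (ht1 : t ≤ 1)
    (hε : ((m - N : ℕ):ℝ) * t^2 ≤ ε) :
    ENNReal.ofReal (bconst n * (1/(2*(n:ℝ)))) ^ (n*N + N*(m-N))
      * ENNReal.ofReal (bconst n * t) ^ (m - N)
    ≤ Measure.pi (fun _ : Fin m => Measure.pi fun _ : Fin n => gaussianReal 0 1)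
        {x | s1 (Matrix.of x) ≤ ε} := by
  classical
  set ν : Measure (Fin n → ℝ) := Measure.pi fun _ : Fin n => gaussianReal 0 1 with hν
  set p : Fin m → Prop := fun i => (i:ℕ) < N with hp
  haveI : ∀ i, Decidable (p i) := fun i => Nat.decLt _ _
  set S : Set ((∀ _ : {i : Fin m // p i}, Fin n → ℝ) × (∀ _ : {i : Fin m // ¬ p i}, Fin n → ℝ)) :=
    {z | (∀ i, z.1 i ∈ Bset n N i.1.1) ∧
         ∀ i, z.2 i ∈ Rset hNn (afun hNm hNn z.1) t} with hSdef
  have hS : MeasurableSet S := by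
    rw [hSdef, Set.setOf_and]
    refine MeasurableSet.inter ?_ ?_
    · rw [Set.setOf_forall]
      refine MeasurableSet.iInter fun i => ?_
      exact (measurable_fst.eval) (MeasurableSet.univ_pi fun _ => measurableSet_Icc)
    · rw [Set.setOf_forall]
      refine MeasurableSet.iInter fun i => ?_
      exact measurable_Rset_mem hNn t _ (measurable_snd.eval) _
        (fun j => (measurable_afun hNm hNn j).comp measurable_fst)
  have hsub : (MeasurableEquiv.piEquivPiSubtypeProd (fun _ : Fin m => Fin n → ℝ) p) ⁻¹' S
      ⊆ {x | s1 (Matrix.of x) ≤ ε} := by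
    intro x hx
    obtain ⟨hx1, hx2⟩ := hx
    obtain ⟨hT, hg⟩ := box_to_T hNm hNn (fun i' => x i'.1) hx1
    have hbot : ∀ i : Fin m, N ≤ (i:ℕ) →
        |x i ⟨N,hNn⟩ - ∑ j : Fin N, x i ⟨j.1, lt_trans j.2 hNn⟩
          * afun hNm hNn (fun i' => x i'.1) j| ≤ t := by
      intro i hi
      exact (hx2 ⟨i, not_lt.mpr hi⟩).2
    exact key_det hN hNm hNm2 hNn hn1 x t ε hε hT hg hbot
  have hmp := measurePreserving_piEquivPiSubtypeProd (fun _ : Fin m => ν) p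
  have hstep1 : ((Measure.pi fun _ : {i : Fin m // p i} => ν).prod
         (Measure.pi fun _ : {i : Fin m // ¬ p i} => ν)) S
      ≤ Measure.pi (fun _ : Fin m => ν) {x | s1 (Matrix.of x) ≤ ε} := by
    rw [← hmp.measure_preimage hS.nullMeasurableSet]
    exact measure_mono hsub
  refine le_trans ?_ hstep1
  rw [Measure.prod_apply hS]
  set A : Set (∀ _ : {i : Fin m // p i}, Fin n → ℝ) :=
    Set.pi Set.univ (fun i => Bset n N i.1.1) with hA
  have hAm : MeasurableSet A :=
    MeasurableSet.univ_pi fun i => MeasurableSet.univ_pi fun _ => measurableSet_Icc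
  have hcardbot : Fintype.card {i : Fin m // ¬ p i} = m - N := by
    rw [Fintype.card_subtype_compl, Fintype.card_fin]
    congr 1
    exact (Fintype.card_congr (ltEquiv hNm)).trans (Fintype.card_fin N)
  have hcardtop : Fintype.card {i : Fin m // p i} = N :=
    (Fintype.card_congr (ltEquiv hNm)).trans (Fintype.card_fin N)
  have hsec : ∀ u ∈ A,
      (ENNReal.ofReal (bconst n * (1/(2*(n:ℝ)))) ^ N * ENNReal.ofReal (bconst n * t)) ^ (m - N)
        ≤ (Measure.pi fun _ : {i : Fin m // ¬ p i} => ν) (Prod.mk u ⁻¹' S) := by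
    intro u hu
    have hu' : ∀ i, u i ∈ Bset n N i.1.1 := fun i => hu i (Set.mem_univ i)
    have hsec_eq : Prod.mk u ⁻¹' S
        = Set.pi Set.univ (fun _ : {i : Fin m // ¬ p i} => Rset hNn (afun hNm hNn u) t) := by
      ext w
      simp only [Set.mem_preimage, hSdef, Set.mem_setOf_eq, Set.mem_pi, Set.mem_univ,
        forall_true_left]
      constructor
      · rintro ⟨-, h2⟩ i
        exact h2 i
      · intro h
        exact ⟨hu', h⟩
    rw [hsec_eq, Measure.pi_pi]
    obtain ⟨hTbox, hgbox⟩ := box_to_T hNm hNn u hu'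
    obtain ⟨-, habound⟩ := afun_spec hN hNm hNn u hTbox hgbox
    have hRlow := nu_R_lower hNn hn1 (afun hNm hNn u) habound t ht0 ht1
    calc (ENNReal.ofReal (bconst n * (1/(2*(n:ℝ)))) ^ N
          * ENNReal.ofReal (bconst n * t)) ^ (m - N)
        = ∏ _i : {i : Fin m // ¬ p i}, (ENNReal.ofReal (bconst n * (1/(2*(n:ℝ)))) ^ N
          * ENNReal.ofReal (bconst n * t)) := by
          rw [Finset.prod_const, Finset.card_univ, hcardbot]
      _ ≤ ∏ _i : {i : Fin m // ¬ p i}, ν (Rset hNn (afun hNm hNn u) t) :=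
          Finset.prod_le_prod' fun i _ => hRlow
  -- measure of the box A
  have hABound : (ENNReal.ofReal (bconst n * (1/(2*(n:ℝ)))) ^ n) ^ N
      ≤ (Measure.pi fun _ : {i : Fin m // p i} => ν) A := by
    rw [hA, Measure.pi_pi]
    have hfac : ∀ i : {i : Fin m // p i},
        ENNReal.ofReal (bconst n * (1/(2*(n:ℝ)))) ^ n ≤ ν (Bset n N i.1.1) := by
      intro i
      rw [hν, Bset, Measure.pi_pi]
      have hn0 : (0:ℝ) < n := by exact_mod_cast lt_of_le_of_lt (Nat.zero_le N) hNn
      have hn1' : (1:ℝ) ≤ (n:ℝ) := by exact_mod_cast Nat.one_le_iff_ne_zero.mpr (by omega)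
      have hterm : ∀ j : Fin n,
          ENNReal.ofReal (bconst n * (1/(2*(n:ℝ))))
          ≤ gaussianReal 0 1 (Set.Icc
              ((if (j:ℕ) = i.1.1 then 1 else 0) - (if (j:ℕ) < N then 1/(2*(n:ℝ)) else 1))
              ((if (j:ℕ) = i.1.1 then 1 else 0) + (if (j:ℕ) < N then 1/(2*(n:ℝ)) else 1))) := by
        intro j
        have hcbound : |(if (j:ℕ) = i.1.1 then (1:ℝ) else 0)| ≤ 2*(n:ℝ) := by
          by_cases h : (j:ℕ) = i.1.1
          · rw [if_pos h, abs_one]; linarith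
          · rw [if_neg h, abs_zero]; linarith
        have hradpos : 0 < (if (j:ℕ) < N then 1/(2*(n:ℝ)) else 1) := by
          by_cases h : (j:ℕ) < N
          · rw [if_pos h]; exact div_pos one_pos (by linarith)
          · rw [if_neg h]; norm_num
        have hrad1 : (if (j:ℕ) < N then 1/(2*(n:ℝ)) else 1) ≤ 1 := by
          by_cases h : (j:ℕ) < N
          · rw [if_pos h, div_le_one (by linarith)]; linarith
          · rw [if_neg h]
        refine le_trans ?_ (gauss_Icc_lower' (n := n) _ _ hcbound hradpos hrad1)
        apply ENNReal.ofReal_le_ofReal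
        have hradlow : 1/(2*(n:ℝ)) ≤ (if (j:ℕ) < N then 1/(2*(n:ℝ)) else 1) := by
          by_cases h : (j:ℕ) < N
          · rw [if_pos h]
          · rw [if_neg h, div_le_one (by linarith)]; linarith
        exact mul_le_mul_of_nonneg_left hradlow (bconst_pos n).le
      calc ENNReal.ofReal (bconst n * (1/(2*(n:ℝ)))) ^ n
          = ∏ _j : Fin n, ENNReal.ofReal (bconst n * (1/(2*(n:ℝ)))) := by
            rw [Finset.prod_const, Finset.card_univ, Fintype.card_fin]
        _ ≤ ∏ j : Fin n, gaussianReal 0 1 (Set.Icc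
              ((if (j:ℕ) = i.1.1 then 1 else 0) - (if (j:ℕ) < N then 1/(2*(n:ℝ)) else 1))
              ((if (j:ℕ) = i.1.1 then 1 else 0) + (if (j:ℕ) < N then 1/(2*(n:ℝ)) else 1))) :=
            Finset.prod_le_prod' fun j _ => hterm j
    calc (ENNReal.ofReal (bconst n * (1/(2*(n:ℝ)))) ^ n) ^ N
        = ∏ _i : {i : Fin m // p i}, ENNReal.ofReal (bconst n * (1/(2*(n:ℝ)))) ^ n := by
          rw [Finset.prod_const, Finset.card_univ, hcardtop]
      _ ≤ ∏ i : {i : Fin m // p i}, ν (Bset n N i.1.1) :=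
          Finset.prod_le_prod' fun i _ => hfac i
  calc ENNReal.ofReal (bconst n * (1/(2*(n:ℝ)))) ^ (n*N + N*(m-N))
        * ENNReal.ofReal (bconst n * t) ^ (m - N)
      = (ENNReal.ofReal (bconst n * (1/(2*(n:ℝ)))) ^ n) ^ N
        * (ENNReal.ofReal (bconst n * (1/(2*(n:ℝ)))) ^ N
            * ENNReal.ofReal (bconst n * t)) ^ (m - N) := by
        ring
    _ ≤ (Measure.pi fun _ : {i : Fin m // p i} => ν) A
        * (ENNReal.ofReal (bconst n * (1/(2*(n:ℝ)))) ^ N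
            * ENNReal.ofReal (bconst n * t)) ^ (m - N) :=
        mul_le_mul_left hABound _
    _ = ∫⁻ u, A.indicator (fun _ => (ENNReal.ofReal (bconst n * (1/(2*(n:ℝ)))) ^ N
            * ENNReal.ofReal (bconst n * t)) ^ (m - N)) u
          ∂(Measure.pi fun _ : {i : Fin m // p i} => ν) := by
        rw [lintegral_indicator_const hAm]
        ring
    _ ≤ ∫⁻ u, (Measure.pi fun _ : {i : Fin m // ¬ p i} => ν) (Prod.mk u ⁻¹' S)
          ∂(Measure.pi fun _ : {i : Fin m // p i} => ν) := by
        refine lintegral_mono fun u => ?_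
        by_cases hu : u ∈ A
        · rw [Set.indicator_of_mem hu]
          exact hsec u hu
        · rw [Set.indicator_of_notMem hu]
          exact zero_le

/-- optimality of the exponent `k/2` in the Wishart tail bound: if
`m ≥ n ≥ 2`, `Γ` is `m × n` with i.i.d. `N(0,1)` entries and `k = m - n + 1`, then for any
`γ > k/2` there is no constant `δ > 0` such that `P(s₁(Γ) ≤ ε) ≤ (δε)^γ` for all `ε > 0`. -/
theorem stmt12 (n m k : ℕ) (hn : 2 ≤ n) (hnm : n ≤ m) (hk : k = m - n + 1) :
    ∀ γ : ℝ, (k : ℝ) / 2 < γ →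
      ¬ ∃ δ : ℝ, 0 < δ ∧ ∀ ε : ℝ, 0 < ε →
        wishartLaw m n {x | s1 (Matrix.of x) ≤ ε} ≤ ENNReal.ofReal ((δ * ε) ^ γ) := by
  intro γ hγ
  rintro ⟨δ, hδ, hbound⟩
  set N := n - 1 with hNdef
  have hN : 0 < N := by omega
  have hNm : N ≤ m := by omega
  have hNm2 : N < m := by omega
  have hNn : N < n := by omega
  have hn1 : n = N + 1 := by omega
  have hkmN : m - N = k := by omega
  have hk1 : 1 ≤ k := by omega
  have hkpos : (0:ℝ) < (k:ℝ) := by exact_mod_cast hk1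
  have hnpos : (0:ℝ) < (n:ℝ) := by
    have : 0 < n := by omega
    exact_mod_cast this
  set b : ℝ := bconst n with hb
  have hbpos : 0 < b := bconst_pos n
  set r : ℝ := 1/(2*(n:ℝ)) with hr
  have hrpos : 0 < r := by rw [hr]; positivity
  set M : ℕ := n*N + N*k with hM
  set s : ℝ := (k:ℝ)/2 with hs
  set c2 : ℝ := (b*r)^M * b^k / (k:ℝ)^s with hc2
  have hc2pos : 0 < c2 := by
    rw [hc2]
    have := Real.rpow_pos_of_pos hkpos s
    positivity
  -- main inequality for each small ε
  have hmain : ∀ ε : ℝ, 0 < ε → ε ≤ (k:ℝ) → c2 ≤ δ^γ * ε^(γ - s) := by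
    intro ε hε0 hεk
    have hq : 0 < ε/(k:ℝ) := div_pos hε0 hkpos
    set t : ℝ := Real.sqrt (ε/(k:ℝ)) with ht
    have ht0 : 0 < t := Real.sqrt_pos.mpr hq
    have ht1 : t ≤ 1 := by
      rw [ht]
      rw [show (1:ℝ) = Real.sqrt 1 from Real.sqrt_one.symm]
      apply Real.sqrt_le_sqrt
      rw [div_le_one hkpos]
      exact hεk
    have ht2 : t^2 = ε/(k:ℝ) := Real.sq_sqrt hq.le
    have hεhyp : ((m - N : ℕ):ℝ) * t^2 ≤ ε := by
      rw [hkmN, ht2]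
      exact le_of_eq (by field_simp)
    have hlow := measure_lower hN hNm hNm2 hNn hn1 t ε ht0 ht1 hεhyp
    rw [hkmN] at hlow
    have hup : wishartLaw m n {x | s1 (Matrix.of x) ≤ ε} ≤ ENNReal.ofReal ((δ * ε) ^ γ) :=
      hbound ε hε0
    have hcomb : ENNReal.ofReal (b * r) ^ M * ENNReal.ofReal (b * t) ^ k
        ≤ ENNReal.ofReal ((δ * ε) ^ γ) := le_trans hlow hup
    have hlhs : ENNReal.ofReal (b * r) ^ M * ENNReal.ofReal (b * t) ^ k
        = ENNReal.ofReal ((b*r)^M * (b*t)^k) := by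
      rw [← ENNReal.ofReal_pow (by positivity), ← ENNReal.ofReal_pow (by positivity),
        ← ENNReal.ofReal_mul (by positivity)]
    rw [hlhs] at hcomb
    have hrhs_nonneg : (0:ℝ) ≤ (δ * ε) ^ γ := Real.rpow_nonneg (by positivity) γ
    have hreal : (b*r)^M * (b*t)^k ≤ (δ * ε) ^ γ :=
      (ENNReal.ofReal_le_ofReal_iff hrhs_nonneg).mp hcomb
    -- rewrite t^k
    have htk : t^k = ε^s / (k:ℝ)^s := by
      rw [ht, Real.sqrt_eq_rpow, ← Real.rpow_natCast ((ε/(k:ℝ)) ^ ((1:ℝ)/2)) k,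
        ← Real.rpow_mul hq.le]
      rw [show (1:ℝ)/2 * (k:ℕ) = s by rw [hs]; push_cast; ring]
      exact Real.div_rpow hε0.le hkpos.le s
    have hbtk : (b*t)^k = b^k * (ε^s / (k:ℝ)^s) := by rw [mul_pow, htk]
    rw [hbtk] at hreal
    have hrγ : (δ * ε) ^ γ = δ^γ * ε^γ := Real.mul_rpow hδ.le hε0.le
    rw [hrγ] at hreal
    have hεγ : ε^γ = ε^s * ε^(γ - s) := by
      rw [← Real.rpow_add hε0]
      congr 1
      ring
    rw [hεγ] at hreal
    have h' : c2 * ε^s ≤ (δ^γ * ε^(γ-s)) * ε^s := by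
      calc c2 * ε^s = (b*r)^M * (b^k * (ε^s / (k:ℝ)^s)) := by
            rw [hc2]
            have hkS : (k:ℝ)^s ≠ 0 := (Real.rpow_pos_of_pos hkpos s).ne'
            field_simp
        _ ≤ δ^γ * (ε^s * ε^(γ-s)) := hreal
        _ = (δ^γ * ε^(γ-s)) * ε^s := by ring
    exact le_of_mul_le_mul_right h' (Real.rpow_pos_of_pos hε0 s)
  -- contradiction as ε → 0
  have hsγ : 0 < γ - s := by
    rw [hs]
    linarith
  have hcont : ContinuousAt (fun e : ℝ => e^(γ-s)) 0 :=
    Real.continuousAt_rpow_const 0 (γ-s) (Or.inr hsγ.le)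
  have htend : Filter.Tendsto (fun e : ℝ => δ^γ * e^(γ - s)) (nhds 0) (nhds 0) := by
    have h1 := hcont.tendsto
    rw [Real.zero_rpow hsγ.ne'] at h1
    have h2 := h1.const_mul (δ^γ)
    rw [mul_zero] at h2
    exact h2
  have hev : ∀ᶠ e in nhds (0:ℝ), δ^γ * e^(γ-s) < c2 :=
    htend.eventually_lt_const hc2pos
  obtain ⟨η, hη, hball⟩ := Metric.eventually_nhds_iff.mp hev
  set ε0 : ℝ := min (η/2) (min 1 (k:ℝ)) with hε0def
  have hε0pos : 0 < ε0 := by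
    rw [hε0def]
    exact lt_min (by linarith) (lt_min one_pos hkpos)
  have hε0k : ε0 ≤ (k:ℝ) := le_trans (min_le_right _ _) (min_le_right _ _)
  have hdist : dist ε0 (0:ℝ) < η := by
    rw [Real.dist_eq, sub_zero, abs_of_pos hε0pos]
    calc ε0 ≤ η/2 := min_le_left _ _
      _ < η := by linarith
  have hlt := hball hdist
  have hge := hmain ε0 hε0pos hε0k
  linarith

end
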